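/- Let b ≥ 3, W ⊊ {0,…,b−1} with |W| ≥ 2, Δ = log|W|/log b. Let ξ ∈ (0,1) be rational with eventually periodic base-b expansion ξ = (0.c_0 c_1 ⋯ c_k \overline{c_{k+1} ⋯ c_{N−1}})_b, and suppose not all digits c_i lie in W; let φ(ξ) ∈ {0,…,N−1} be the smallest index i with c_i ∉ W. If q_0 is the reduced denominator of ξ, then φ(ξ) ≪ q_0^Δ (implied constant depending only on b and W). Equivalently, if the first s digits of ξ all lie in W but some later digit does not, then q_0 ≫ s^{1/Δ}. -/

import Mathlib

/-- The missing digit Cantor set `C_{b,W}`. -/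
def missingDigitSet (b : ℕ) (W : Finset ℕ) : Set ℝ :=
  {x | ∃ w : ℕ → ℕ, (∀ j, w j ∈ W) ∧ x = ∑' j : ℕ, (w j : ℝ) / (b : ℝ) ^ (j + 1)}

noncomputable def dTail (b : ℕ) (c : ℕ → ℕ) (j : ℕ) : ℝ :=
  ∑' t : ℕ, (c (j + t) : ℝ) / (b : ℝ) ^ (t + 1)

section aux
variable {b : ℕ} {c : ℕ → ℕ}

lemma dSummable (hb : 2 ≤ b) (hc : ∀ j, c j < b) (j : ℕ) :
    Summable fun t : ℕ => (c (j + t) : ℝ) / (b : ℝ) ^ (t + 1) := by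
  have hb1 : (1:ℝ) < b := by exact_mod_cast (by omega : 1 < b)
  have hb0 : (0:ℝ) < b := by linarith
  refine Summable.of_nonneg_of_le (fun t => by positivity) (fun t => ?_)
    (summable_geometric_of_lt_one (by positivity) (inv_lt_one_of_one_lt₀ hb1))
  have h1 : ((c (j+t) : ℝ)) ≤ (b:ℝ) := le_of_lt (by exact_mod_cast hc (j+t))
  have h2 : (b:ℝ) / (b:ℝ)^(t+1) = ((b:ℝ)⁻¹)^t := by
    rw [inv_pow, pow_succ, mul_comm, div_mul_eq_div_div, div_self (ne_of_gt hb0), one_div]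
  calc ((c (j+t) : ℝ)) / (b:ℝ)^(t+1) ≤ (b:ℝ) / (b:ℝ)^(t+1) := by gcongr
    _ = ((b:ℝ)⁻¹)^t := h2

lemma dTail_nonneg (j : ℕ) : 0 ≤ dTail b c j :=
  tsum_nonneg fun t => by positivity

lemma dSummableTop (hb : 2 ≤ b) : Summable fun t : ℕ => ((b:ℝ) - 1) / (b : ℝ) ^ (t + 1) := by
  have hb1 : (1:ℝ) < b := by exact_mod_cast (by omega : 1 < b)
  have hb0 : (0:ℝ) < b := by linarith
  have := (summable_geometric_of_lt_one (le_of_lt (by positivity : (0:ℝ) < (b:ℝ)⁻¹))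
    (inv_lt_one_of_one_lt₀ hb1)).mul_left (((b:ℝ) - 1) / b)
  apply this.congr
  intro t
  rw [inv_pow, pow_succ]
  ring

lemma dTsumTop (hb : 2 ≤ b) : ∑' t : ℕ, ((b:ℝ) - 1) / (b : ℝ) ^ (t + 1) = 1 := by
  have hb1 : (1:ℝ) < b := by exact_mod_cast (by omega : 1 < b)
  have hb0 : (0:ℝ) < b := by linarith
  have hg := tsum_geometric_of_lt_one (le_of_lt (by positivity : (0:ℝ) < (b:ℝ)⁻¹))
    (inv_lt_one_of_one_lt₀ hb1)
  have hrw : (1 - (b:ℝ)⁻¹) = ((b:ℝ)-1)/b := by field_simp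
  calc ∑' t : ℕ, ((b:ℝ) - 1) / (b : ℝ) ^ (t + 1)
      = ∑' t : ℕ, (((b:ℝ) - 1) / b) * ((b:ℝ)⁻¹) ^ t := by
        apply tsum_congr; intro t; rw [inv_pow, pow_succ]; ring
    _ = (((b:ℝ) - 1) / b) * (1 - (b:ℝ)⁻¹)⁻¹ := by rw [tsum_mul_left, hg]
    _ = 1 := by
        rw [hrw]
        exact mul_inv_cancel₀ (ne_of_gt (div_pos (by linarith) hb0))

lemma dDigitLe (hb : 2 ≤ b) (hc : ∀ j, c j < b) (i : ℕ) : ((c i : ℝ)) ≤ (b:ℝ) - 1 := by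
  have : (c i:ℝ) + 1 ≤ b := by exact_mod_cast hc i
  linarith

lemma dTail_le_one (hb : 2 ≤ b) (hc : ∀ j, c j < b) (j : ℕ) : dTail b c j ≤ 1 := by
  calc dTail b c j ≤ ∑' t : ℕ, ((b:ℝ) - 1) / (b : ℝ) ^ (t + 1) := by
        apply Summable.tsum_le_tsum _ (dSummable hb hc j) (dSummableTop hb)
        intro t
        gcongr
        exact dDigitLe hb hc (j+t)
    _ = 1 := dTsumTop hb
end aux

section aux2
variable {b : ℕ} {c : ℕ → ℕ}

lemma dTail_rec (hb : 2 ≤ b) (hc : ∀ j, c j < b) (j : ℕ) :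
    dTail b c j = (c j : ℝ) / b + dTail b c (j+1) / b := by
  have hb0 : (0:ℝ) < b := by exact_mod_cast (by omega : 0 < b)
  rw [dTail, Summable.tsum_eq_zero_add (dSummable hb hc j)]
  congr 1
  · norm_num
  · rw [dTail, eq_comm, div_eq_iff (ne_of_gt hb0), ← tsum_mul_right]
    apply tsum_congr
    intro t
    have h : j + (t + 1) = j + 1 + t := by omega
    rw [h, pow_succ]
    field_simp
    ring

lemma dTail_split (hb : 2 ≤ b) (hc : ∀ j, c j < b) (j t : ℕ) :
    dTail b c j = (∑ u ∈ Finset.range t, (c (j + u) : ℝ) / (b:ℝ) ^ (u+1))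
      + dTail b c (j + t) / (b:ℝ) ^ t := by
  have hb0 : (0:ℝ) < b := by exact_mod_cast (by omega : 0 < b)
  induction t with
  | zero => simp
  | succ t ih =>
    rw [ih, Finset.sum_range_succ, dTail_rec hb hc (j + t)]
    have h : j + (t+1) = j + t + 1 := by omega
    rw [h, pow_succ]
    field_simp
    ring

lemma dTail_eq_one (hb : 2 ≤ b) (hc : ∀ j, c j < b) (j : ℕ) (h1 : dTail b c j = 1) :
    ∀ t, c (j + t) = b - 1 := by
  intro t
  have hsub : Summable fun t : ℕ => ((b:ℝ) - 1) / (b : ℝ) ^ (t + 1) - (c (j + t) : ℝ) / (b : ℝ) ^ (t + 1) :=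
    (dSummableTop hb).sub (dSummable hb hc j)
  have htsum : ∑' t : ℕ, (((b:ℝ) - 1) / (b : ℝ) ^ (t + 1) - (c (j + t) : ℝ) / (b : ℝ) ^ (t + 1)) = 0 := by
    rw [Summable.tsum_sub (dSummableTop hb) (dSummable hb hc j), dTsumTop hb]
    rw [show ∑' t : ℕ, (c (j + t) : ℝ) / (b : ℝ) ^ (t + 1) = dTail b c j from rfl, h1]
    ring
  have hle := Summable.le_tsum hsub t (fun u _ => by
    have h := dDigitLe hb hc (j + u)
    have hp : (0:ℝ) < (b:ℝ) ^ (u+1) := by positivity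
    have : (c (j+u) : ℝ) / (b:ℝ)^(u+1) ≤ ((b:ℝ)-1) / (b:ℝ)^(u+1) := by gcongr
    linarith)
  rw [htsum] at hle
  have h := dDigitLe hb hc (j + t)
  have hp : (0:ℝ) < (b:ℝ) ^ (t+1) := by positivity
  have heq : (c (j + t) : ℝ) = (b:ℝ) - 1 := by
    have h2 : (c (j+t) : ℝ) / (b:ℝ)^(t+1) ≤ ((b:ℝ)-1) / (b:ℝ)^(t+1) := by gcongr
    have h3 : ((b:ℝ)-1) / (b:ℝ)^(t+1) ≤ (c (j+t) : ℝ) / (b:ℝ)^(t+1) := by linarith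
    have h4 := le_antisymm h2 h3
    field_simp at h4
    linarith
  have : (c (j+t) : ℝ) + 1 = (b : ℝ) := by linarith
  have : c (j+t) + 1 = b := by exact_mod_cast this
  omega

lemma dTail_eq_zero (hb : 2 ≤ b) (hc : ∀ j, c j < b) (j : ℕ) (h0 : dTail b c j = 0) :
    ∀ t, c (j + t) = 0 := by
  intro t
  have hle := Summable.le_tsum (dSummable hb hc j) t (fun u _ => by positivity)
  rw [show ∑' t : ℕ, (c (j + t) : ℝ) / (b : ℝ) ^ (t + 1) = dTail b c j from rfl, h0] at hle
  have hp : (0:ℝ) < (b:ℝ) ^ (t+1) := by positivity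
  have hge : (0:ℝ) ≤ (c (j + t) : ℝ) / (b:ℝ)^(t+1) := by positivity
  have : (c (j + t) : ℝ) / (b:ℝ)^(t+1) = 0 := le_antisymm hle hge
  have : (c (j + t) : ℝ) = 0 := by
    field_simp at this
    exact_mod_cast this
  exact_mod_cast this

end aux2

section aux3
variable {b : ℕ} {c : ℕ → ℕ}

lemma dTail_step_aux (hb : 2 ≤ b) (hc : ∀ j, c j < b) {i j : ℕ}
    (heq : (c i : ℝ) + dTail b c (i+1) = (c j : ℝ) + dTail b c (j+1))
    (hlt : c i < c j) : False := by
  have h1 : (c i : ℝ) + 1 ≤ c j := by exact_mod_cast hlt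
  have hi1 : dTail b c (i+1) ≤ 1 := dTail_le_one hb hc _
  have hj0 : (0:ℝ) ≤ dTail b c (j+1) := dTail_nonneg _
  have hi0 : (0:ℝ) ≤ dTail b c (i+1) := dTail_nonneg _
  have hj1 : dTail b c (j+1) ≤ 1 := dTail_le_one hb hc _
  have hxi : dTail b c (i+1) = 1 := by linarith
  have hxj : dTail b c (j+1) = 0 := by linarith
  have hbig := dTail_eq_one hb hc _ hxi (j + 1)
  have hsmall := dTail_eq_zero hb hc _ hxj (i + 1)
  rw [show j + 1 + (i + 1) = i + 1 + (j + 1) by omega] at hsmall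
  omega

lemma dTail_step (hb : 2 ≤ b) (hc : ∀ j, c j < b) {i j : ℕ}
    (h : dTail b c i = dTail b c j) :
    c i = c j ∧ dTail b c (i+1) = dTail b c (j+1) := by
  have hb0 : (0:ℝ) < b := by exact_mod_cast (by omega : 0 < b)
  have h2 : (c i : ℝ)/b + dTail b c (i+1)/b = (c j : ℝ)/b + dTail b c (j+1)/b := by
    rw [← dTail_rec hb hc i, ← dTail_rec hb hc j, h]
  have heq : (c i : ℝ) + dTail b c (i+1) = (c j : ℝ) + dTail b c (j+1) := by
    field_simp at h2
    linarith
  rcases Nat.lt_trichotomy (c i) (c j) with hlt | heqc | hgt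
  · exact absurd (dTail_step_aux hb hc heq hlt) (not_false)
  · refine ⟨heqc, ?_⟩
    have : (c i : ℝ) = c j := by exact_mod_cast heqc
    linarith
  · exact absurd (dTail_step_aux hb hc heq.symm hgt) (not_false)

lemma dTail_shift (hb : 2 ≤ b) (hc : ∀ j, c j < b) {i j : ℕ}
    (h : dTail b c i = dTail b c j) :
    ∀ t, c (i + t) = c (j + t) ∧ dTail b c (i + t) = dTail b c (j + t) := by
  intro t
  induction t with
  | zero => exact ⟨(dTail_step hb hc h).1, h⟩
  | succ t ih =>
    have hx1 := (dTail_step hb hc ih.2).2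
    exact ⟨(dTail_step hb hc hx1).1, hx1⟩

lemma dTail_int (hb : 2 ≤ b) (hc : ∀ j, c j < b) (j : ℕ) :
    ∃ n : ℤ, dTail b c j = (b:ℝ)^j * dTail b c 0 - n := by
  induction j with
  | zero => exact ⟨0, by simp⟩
  | succ j ih =>
    obtain ⟨n, hn⟩ := ih
    have hb0 : (0:ℝ) < b := by exact_mod_cast (by omega : 0 < b)
    have hr := dTail_rec hb hc j
    have hstep : dTail b c (j+1) = b * dTail b c j - c j := by
      field_simp at hr
      linarith
    refine ⟨b * n + c j, ?_⟩
    rw [hstep, hn]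
    push_cast
    ring

end aux3


/-- if the rational `ξ ∈ (0,1)` has eventually periodic base-`b` digits
`c 0, c 1, …` (preperiod `c 0 … c k`, period `c (k+1) … c (N-1)`), not all digits lie
in `W`, and `m` is the smallest index with `c m ∉ W`, then `m ≪_{b,W} q₀^Δ` for `q₀`
the reduced denominator of `ξ`. -/
theorem stmt_18 (b : ℕ) (hb : 3 ≤ b) (W : Finset ℕ)
    (hWsub : W ⊆ Finset.range b) (hW2 : 2 ≤ W.card) (hWne : W ≠ Finset.range b)
    (Δ : ℝ) (hΔ : Δ = Real.log W.card / Real.log b) :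
    ∃ K : ℝ, 0 < K ∧ ∀ (ξ : ℚ) (c : ℕ → ℕ) (k N : ℕ) (m : ℕ),
      0 < ξ → ξ < 1 → (∀ j, c j < b) → k + 1 < N →
      (ξ : ℝ) = ∑' j : ℕ, (c j : ℝ) / (b : ℝ) ^ (j + 1) →
      (∀ j, k + 1 ≤ j → c (j + (N - 1 - k)) = c j) →
      IsLeast {i : ℕ | c i ∉ W} m →
      (m : ℝ) ≤ K * (ξ.den : ℝ) ^ Δ := by
  have hb2 : 2 ≤ b := by omega
  have hb1R : (1:ℝ) < b := by exact_mod_cast (by omega : 1 < b)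
  have hb0R : (0:ℝ) < b := by linarith
  have hlogb : 0 < Real.log b := Real.log_pos hb1R
  have hW1R : (1:ℝ) < W.card := by exact_mod_cast (by omega : 1 < W.card)
  have hlogW : 0 < Real.log W.card := Real.log_pos hW1R
  have hΔpos : 0 < Δ := hΔ ▸ div_pos hlogW hlogb
  have hWrpow : (W.card : ℝ) = (b:ℝ) ^ Δ := by
    rw [Real.rpow_def_of_pos hb0R, hΔ, mul_comm, div_mul_cancel₀ _ (ne_of_gt hlogb),
      Real.exp_log (by linarith)]
  refine ⟨1 / (Δ * Real.log b) + W.card, add_pos (div_pos one_pos (mul_pos hΔpos hlogb)) (by linarith), ?_⟩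
  intro ξ c k N m hξ0 hξ1 hc hkN hexp hper hleast
  clear hkN hper hξ0 hξ1
  obtain ⟨hmem, hlb⟩ := hleast
  simp only [Set.mem_setOf_eq] at hmem
  -- basic setup
  set q : ℕ := ξ.den with hqdef
  have hq0 : 0 < q := ξ.pos
  have hq0R : (0:ℝ) < q := by exact_mod_cast hq0
  set L : ℕ := Nat.log b q with hLdef
  set t : ℕ := L + 1 with htdef
  have hqlt : q < b ^ t := Nat.lt_pow_succ_log_self (by omega) q
  have hqltR : (q:ℝ) < (b:ℝ) ^ t := by exact_mod_cast hqlt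
  have hbtpos : (0:ℝ) < (b:ℝ) ^ t := by positivity
  -- ξ = dTail b c 0
  have hξx : (ξ : ℝ) = dTail b c 0 := by
    rw [hexp, dTail]
    exact tsum_congr fun j => by rw [zero_add]
  -- integrality
  have hZ : ∀ j : ℕ, ∃ n : ℤ, dTail b c j = (n : ℝ) / q := by
    intro j
    obtain ⟨n, hn⟩ := dTail_int hb2 hc j
    refine ⟨(b:ℤ)^j * ξ.num - n * q, ?_⟩
    have hnum : (ξ : ℝ) = (ξ.num : ℝ) / (q : ℝ) := by
      rw [Rat.cast_def]
    rw [hn, ← hξx, hnum]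
    push_cast
    field_simp
  -- injectivity of dTail on [0, m]
  have hinW : ∀ i, i < m → c i ∈ W := by
    intro i hi
    by_contra hno
    exact absurd (hlb hno) (by omega)
  have hkey : ∀ i j, i < j → j ≤ m → dTail b c i = dTail b c j → False := by
    intro i j hij hjm h
    have hWall : ∀ n, c (i + n) ∈ W := by
      intro n
      induction n using Nat.strong_induction_on with
      | _ n ih =>
        by_cases hlt : i + n < m
        · exact hinW _ hlt
        · have hge : j ≤ i + n := by omega
          have hs : c (j + (i + n - j)) = c (i + (i + n - j)) :=
            ((dTail_shift hb2 hc h (i + n - j)).1).symm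
          rw [show j + (i + n - j) = i + n by omega] at hs
          rw [hs, show i + (i + n - j) = i + (n - (j - i)) by omega]
          exact ih (n - (j - i)) (by omega)
    have := hWall (m - i)
    rw [show i + (m - i) = m by omega] at this
    exact hmem this
  have hinj : ∀ i j, i ≤ m → j ≤ m → dTail b c i = dTail b c j → i = j := by
    intro i j hi hj h
    rcases Nat.lt_trichotomy i j with hlt | heq | hgt
    · exact absurd (hkey i j hlt hj h) not_false
    · exact heq
    · exact absurd (hkey j i hgt hi h.symm) not_false
  -- word values
  set v : ℕ → ℕ := fun j => ∑ u ∈ Finset.range t, c (j + u) * b ^ (t - 1 - u) with hvdef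
  have hword : ∀ j : ℕ,
      dTail b c j = (v j : ℝ) / (b:ℝ) ^ t + dTail b c (j + t) / (b:ℝ) ^ t := by
    intro j
    rw [dTail_split hb2 hc j t]
    congr 1
    rw [eq_div_iff (ne_of_gt hbtpos), Finset.sum_mul, hvdef]
    push_cast
    apply Finset.sum_congr rfl
    intro u hu
    rw [Finset.mem_range] at hu
    have hpow : (b:ℝ) ^ (t - 1 - u) * (b:ℝ) ^ (u + 1) = (b:ℝ) ^ t := by
      rw [← pow_add]
      congr 1
      omega
    rw [div_mul_eq_mul_div, div_eq_iff (by positivity), mul_assoc, hpow]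
  -- counting
  set VW : Finset ℕ :=
    (Fintype.piFinset (fun _ : Fin t => W)).image
      (fun f => ∑ u : Fin t, f u * b ^ (t - 1 - (u:ℕ))) with hVWdef
  have hVWcard : VW.card ≤ W.card ^ t := by
    refine le_trans Finset.card_image_le ?_
    rw [Fintype.card_piFinset]
    simp [Finset.prod_const]
  have hmain : m + 1 ≤ t + W.card ^ t := by
    by_cases hmt : m < t
    · omega
    · have hcard : (Finset.range (m - t + 1)).card ≤ VW.card := by
        apply Finset.card_le_card_of_injOn v
        · intro j hj
          rw [Finset.mem_coe, Finset.mem_range] at hj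
          rw [Finset.mem_coe, hVWdef, Finset.mem_image]
          refine ⟨fun u : Fin t => c (j + u), ?_, ?_⟩
          · rw [Fintype.mem_piFinset]
            intro u
            exact hinW _ (by omega)
          · rw [hvdef]
            exact (Fin.sum_univ_eq_sum_range (fun u => c (j + u) * b ^ (t - 1 - u)) t)
        · intro j hj j' hj' hv
          simp only [Finset.coe_range, Set.mem_Iio, Finset.mem_coe, Finset.mem_range] at hj hj'
          obtain ⟨n, hn⟩ := hZ j
          obtain ⟨n', hn'⟩ := hZ j'
          have e1 : dTail b c j - dTail b c j' =
              (dTail b c (j + t) - dTail b c (j' + t)) / (b:ℝ) ^ t := by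
            rw [hword j, hword j', hv]
            ring
          have e2 : ((n : ℝ) - n') / q =
              (dTail b c (j + t) - dTail b c (j' + t)) / (b:ℝ) ^ t := by
            rw [← e1, hn, hn']
            ring
          have e4 : ((n : ℝ) - n') * (b:ℝ) ^ t =
              (dTail b c (j + t) - dTail b c (j' + t)) * q :=
            (div_eq_div_iff (ne_of_gt hq0R) (ne_of_gt hbtpos)).mp e2
          have hX1 : dTail b c (j + t) ≤ 1 := dTail_le_one hb2 hc _
          have hX2 : dTail b c (j' + t) ≤ 1 := dTail_le_one hb2 hc _
          have hX3 : (0:ℝ) ≤ dTail b c (j + t) := dTail_nonneg _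
          have hX4 : (0:ℝ) ≤ dTail b c (j' + t) := dTail_nonneg _
          have em : |(n:ℝ) - n'| * (b:ℝ)^t
              = |dTail b c (j + t) - dTail b c (j' + t)| * (q:ℝ) := by
            rw [← abs_of_pos hbtpos, ← abs_mul, e4, abs_mul, abs_of_pos hq0R]
          have habs : |(n:ℝ) - n'| * (b:ℝ)^t < (b:ℝ)^t := by
            rw [em]
            calc |dTail b c (j + t) - dTail b c (j' + t)| * (q:ℝ)
                ≤ 1 * (q:ℝ) := by
                  apply mul_le_mul_of_nonneg_right _ (le_of_lt hq0R)
                  exact abs_le.mpr ⟨by linarith, by linarith⟩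
              _ < (b:ℝ)^t := by rw [one_mul]; exact hqltR
          have habs1 : |(n:ℝ) - n'| < 1 := by
            rwa [mul_lt_iff_lt_one_left hbtpos] at habs
          have hnn' : n = n' := by
            have h5 : |((n - n' : ℤ) : ℝ)| < 1 := by push_cast; exact habs1
            have h6 : |n - n'| < 1 := by exact_mod_cast h5
            have := Int.abs_lt_one_iff.mp h6
            omega
          apply hinj j j' (by omega) (by omega)
          rw [hn, hn', hnn']
      rw [Finset.card_range] at hcard
      have := le_trans hcard hVWcard
      omega
  -- final numeric estimate
  have hq1R : (1:ℝ) ≤ q := by exact_mod_cast hq0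
  have hqΔ1 : (1:ℝ) ≤ (q:ℝ) ^ Δ := Real.one_le_rpow hq1R (le_of_lt hΔpos)
  have hpowL : (b:ℝ) ^ (L:ℕ) ≤ (q:ℝ) := by
    exact_mod_cast Nat.pow_log_le_self b (by omega : q ≠ 0)
  have hLbound : (L : ℝ) ≤ (q:ℝ) ^ Δ / (Δ * Real.log b) := by
    rw [le_div_iff₀ (mul_pos hΔpos hlogb)]
    have h1 : (L:ℝ) * Real.log b ≤ Real.log q := by
      rw [← Real.log_pow]
      exact Real.log_le_log (by positivity) hpowL
    have h2 : Δ * Real.log q = Real.log ((q:ℝ) ^ Δ) := (Real.log_rpow hq0R Δ).symm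
    have h3 : Real.log ((q:ℝ) ^ Δ) ≤ (q:ℝ) ^ Δ - 1 :=
      Real.log_le_sub_one_of_pos (by positivity)
    nlinarith
  have hpowW : ((W.card : ℝ)) ^ t ≤ (W.card : ℝ) * (q:ℝ) ^ Δ := by
    have hWL : ((W.card : ℝ)) ^ (L:ℕ) ≤ (q:ℝ) ^ Δ := by
      have h1 : ((W.card : ℝ)) ^ (L:ℕ) = ((b:ℝ) ^ (L:ℕ)) ^ Δ := by
        rw [hWrpow, ← Real.rpow_natCast ((b:ℝ)^Δ) L, ← Real.rpow_natCast (b:ℝ) L,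
          ← Real.rpow_mul (le_of_lt hb0R), ← Real.rpow_mul (le_of_lt hb0R), mul_comm]
      rw [h1]
      exact Real.rpow_le_rpow (by positivity) hpowL (le_of_lt hΔpos)
    calc ((W.card : ℝ)) ^ t = (W.card : ℝ) * ((W.card : ℝ)) ^ (L:ℕ) := by
          rw [htdef, pow_succ]; ring
      _ ≤ (W.card : ℝ) * (q:ℝ) ^ Δ := by
          apply mul_le_mul_of_nonneg_left hWL (Nat.cast_nonneg _)
  have hmR : (m : ℝ) ≤ (L : ℝ) + ((W.card : ℝ)) ^ t := by
    have : (m : ℝ) + 1 ≤ (t : ℝ) + ((W.card : ℕ) ^ t : ℕ) := by exact_mod_cast hmain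
    push_cast at this ⊢
    rw [htdef] at this
    push_cast at this
    linarith
  calc (m : ℝ) ≤ (L : ℝ) + ((W.card : ℝ)) ^ t := hmR
    _ ≤ (q:ℝ) ^ Δ / (Δ * Real.log b) + (W.card : ℝ) * (q:ℝ) ^ Δ := by
        exact add_le_add hLbound hpowW
    _ = (1 / (Δ * Real.log b) + W.card) * (q:ℝ) ^ Δ := by ring
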